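/- Let G be the graph on vertices {a,b,c,d,e,f,g,h} with edges ab, ac, bc, cd, ce, cf, de, ah, eg. Then G has an intersection representation by unit intervals (using all four types), but has no intersection representation using only closed, open, and closed-open unit intervals, and no intersection representation using only closed, open, and open-closed unit intervals. -/

import Mathlib

open Set

def IsUnitCC (I : Set ℝ) : Prop := ∃ x : ℝ, I = Set.Icc x (x + 1)
def IsUnitOO (I : Set ℝ) : Prop := ∃ x : ℝ, I = Set.Ioo x (x + 1)
def IsUnitCO (I : Set ℝ) : Prop := ∃ x : ℝ, I = Set.Ico x (x + 1)
def IsUnitOC (I : Set ℝ) : Prop := ∃ x : ℝ, I = Set.Ioc x (x + 1)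
def IsUnitInterval (I : Set ℝ) : Prop := IsUnitCC I ∨ IsUnitOO I ∨ IsUnitCO I ∨ IsUnitOC I

def IsRep {V : Type*} (G : SimpleGraph V) (f : V → Set ℝ) : Prop :=
  ∀ u v : V, u ≠ v → (G.Adj u v ↔ (f u ∩ f v).Nonempty)

def MixedUIG {V : Type*} (G : SimpleGraph V) : Prop :=
  ∃ f : V → Set ℝ, IsRep G f ∧ ∀ v, IsUnitInterval (f v)

def AlmostMixedUIG {V : Type*} (G : SimpleGraph V) : Prop :=
  ∃ f : V → Set ℝ, IsRep G f ∧ ∀ v, IsUnitCC (f v) ∨ IsUnitOO (f v) ∨ IsUnitCO (f v)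

def TwinFree {V : Type*} (G : SimpleGraph V) : Prop :=
  ∀ u v : V, insert u (G.neighborSet u) = insert v (G.neighborSet v) → u = v

def G9 : SimpleGraph (Fin 8) :=
  SimpleGraph.fromRel (fun i j => ((i : ℕ), (j : ℕ)) ∈
    ({(0,1),(0,2),(1,2),(2,3),(2,4),(2,5),(3,4),(0,7),(4,6)} : Set (ℕ × ℕ)))

/-! ### Auxiliary interval machinery -/

def UI (x : ℝ) (l r : Bool) : Set ℝ :=
  {t | (if l then x ≤ t else x < t) ∧ (if r then t ≤ x + 1 else t < x + 1)}

lemma Icc_eq_UI (x : ℝ) : Set.Icc x (x+1) = UI x true true := by ext t; simp [UI]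
lemma Ioo_eq_UI (x : ℝ) : Set.Ioo x (x+1) = UI x false false := by ext t; simp [UI]
lemma Ico_eq_UI (x : ℝ) : Set.Ico x (x+1) = UI x true false := by ext t; simp [UI]
lemma Ioc_eq_UI (x : ℝ) : Set.Ioc x (x+1) = UI x false true := by ext t; simp [UI]

def Meets (x y : ℝ) (lx rx ly ry : Bool) : Prop :=
  (x < y + 1 ∧ y < x + 1) ∨ (y = x + 1 ∧ rx = true ∧ ly = true) ∨
    (x = y + 1 ∧ ry = true ∧ lx = true)

lemma UI_inter (x y : ℝ) (lx rx ly ry : Bool) :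
    (UI x lx rx ∩ UI y ly ry).Nonempty ↔ Meets x y lx rx ly ry := by
  constructor
  · rintro ⟨t, ⟨h1, h2⟩, ⟨h3, h4⟩⟩
    have w1 : x ≤ t := by cases lx <;> simp_all <;> linarith
    have w2 : t ≤ x + 1 := by cases rx <;> simp_all <;> linarith
    have w3 : y ≤ t := by cases ly <;> simp_all <;> linarith
    have w4 : t ≤ y + 1 := by cases ry <;> simp_all <;> linarith
    by_cases hxy : x < y + 1 ∧ y < x + 1
    · exact Or.inl hxy
    · push_neg at hxy
      rcases lt_or_ge x (y+1) with h | h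
      · have hyx : x + 1 ≤ y := hxy h
        have ht : t = x + 1 := le_antisymm w2 (le_trans hyx w3)
        have hty : t = y := le_antisymm (by linarith) w3
        have hrx : rx = true := by
          cases rx
          · simp at h2; linarith
          · rfl
        have hly : ly = true := by
          cases ly
          · simp at h3; linarith
          · rfl
        exact Or.inr (Or.inl ⟨by linarith, hrx, hly⟩)
      · have ht : t = y + 1 := le_antisymm w4 (by linarith)
        have htx : t = x := le_antisymm (by linarith) w1
        have hry : ry = true := by
          cases ry
          · simp at h4; linarith
          · rfl
        have hlx : lx = true := by
          cases lx
          · simp at h1; linarith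
          · rfl
        exact Or.inr (Or.inr ⟨by linarith, hry, hlx⟩)
  · rintro (⟨h1, h2⟩ | ⟨h1, h2, h3⟩ | ⟨h1, h2, h3⟩)
    · refine ⟨(max x y + (min x y + 1)) / 2, ⟨?_, ?_⟩, ⟨?_, ?_⟩⟩ <;>
      · have m1 : max x y < min x y + 1 := by
          rcases max_cases x y with ⟨hm, _⟩ | ⟨hm, _⟩ <;> rcases min_cases x y with ⟨hn, _⟩ | ⟨hn, _⟩ <;>
            rw [hm, hn] <;> linarith
        have := le_max_left x y
        have := le_max_right x y
        have := min_le_left x y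
        have := min_le_right x y
        split <;> linarith
    · subst h1; subst h2; subst h3
      refine ⟨x + 1, ⟨?_, ?_⟩, ⟨?_, ?_⟩⟩ <;> split <;> first | linarith | simp_all
    · subst h1; subst h2; subst h3
      refine ⟨y + 1, ⟨?_, ?_⟩, ⟨?_, ?_⟩⟩ <;> split <;> first | linarith | simp_all

lemma Meets_comm {x y : ℝ} {lx rx ly ry : Bool} (h : Meets x y lx rx ly ry) :
    Meets y x ly ry lx rx := by
  unfold Meets at *; tauto

lemma Meets_far {x y : ℝ} {lx rx ly ry : Bool} (h : Meets x y lx rx ly ry) :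
    x ≤ y + 1 ∧ y ≤ x + 1 := by
  rcases h with ⟨h1, h2⟩ | ⟨h1, _⟩ | ⟨h1, _⟩ <;> constructor <;> linarith

lemma notMeets_far {x y : ℝ} {lx rx ly ry : Bool} (h : ¬ Meets x y lx rx ly ry) :
    x + 1 ≤ y ∨ y + 1 ≤ x := by
  by_contra hc
  push_neg at hc
  exact h (Or.inl ⟨by linarith [hc.1, hc.2], by linarith [hc.1, hc.2]⟩)

lemma key' {xa xb xc xd xe xf xg xh : ℝ}
    {la ra lb rb lc rc ld rd le re lf rf lg rg lh rh : Bool}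
    (pa : ra = true → la = true) (pb : rb = true → lb = true)
    (hle : xa ≤ xd)
    (Hab : Meets xa xb la ra lb rb)
    (Hac : Meets xa xc la ra lc rc)
    (Hbc : Meets xb xc lb rb lc rc)
    (Hcd : Meets xc xd lc rc ld rd)
    (Hce : Meets xc xe lc rc le re)
    (Hcf : Meets xc xf lc rc lf rf)
    (Hde : Meets xd xe ld rd le re)
    (Hah : Meets xa xh la ra lh rh)
    (Heg : Meets xe xg le re lg rg)
    (Nad : ¬ Meets xa xd la ra ld rd)
    (Nae : ¬ Meets xa xe la ra le re)
    (Nbd : ¬ Meets xb xd lb rb ld rd)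
    (Nbe : ¬ Meets xb xe lb rb le re)
    (Naf : ¬ Meets xa xf la ra lf rf)
    (Nbf : ¬ Meets xb xf lb rb lf rf)
    (Ndf : ¬ Meets xd xf ld rd lf rf)
    (Nef : ¬ Meets xe xf le re lf rf)
    (Nbh : ¬ Meets xb xh lb rb lh rh)
    (Ndg : ¬ Meets xd xg ld rd lg rg) : False := by
  obtain ⟨fab1, fab2⟩ := Meets_far Hab
  obtain ⟨fac1, fac2⟩ := Meets_far Hac
  obtain ⟨fbc1, fbc2⟩ := Meets_far Hbc
  obtain ⟨fcd1, fcd2⟩ := Meets_far Hcd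
  obtain ⟨fce1, fce2⟩ := Meets_far Hce
  obtain ⟨fcf1, fcf2⟩ := Meets_far Hcf
  obtain ⟨fde1, fde2⟩ := Meets_far Hde
  have had : xa + 1 ≤ xd := by
    rcases notMeets_far Nad with h | h
    · exact h
    · linarith
  have hae : xa + 1 ≤ xe := by
    rcases notMeets_far Nae with h | h
    · exact h
    · linarith
  have hbd : xb + 1 ≤ xd := by
    rcases notMeets_far Nbd with h | h
    · exact h
    · linarith
  have hbe : xb + 1 ≤ xe := by
    rcases notMeets_far Nbe with h | h
    · exact h
    · linarith
  rcases notMeets_far Naf with hA | hA <;> rcases notMeets_far Nbf with hB | hB <;>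
    rcases notMeets_far Ndf with hD | hD <;> rcases notMeets_far Nef with hE | hE
  · -- (A,B,D,E): CC endgame
    have e1 : xc = xa + 1 := by linarith
    have e2 : xc = xb + 1 := by linarith
    have hra : ra = true := by
      rcases Hac with ⟨h1, h2⟩ | ⟨_, h2, _⟩ | ⟨h1, _, _⟩
      · linarith
      · exact h2
      · linarith
    have hrb : rb = true := by
      rcases Hbc with ⟨h1, h2⟩ | ⟨_, h2, _⟩ | ⟨h1, _, _⟩
      · linarith
      · exact h2
      · linarith
    have hla := pa hra
    have hlb := pb hrb
    rw [hla, hra] at Hah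
    refine Nbh ?_
    rw [hlb, hrb, show xb = xa by linarith]
    exact Hah
  · linarith
  · linarith
  · -- (A,B,D',E'): CC endgame
    have e1 : xc = xa + 1 := by linarith
    have e2 : xc = xb + 1 := by linarith
    have hra : ra = true := by
      rcases Hac with ⟨h1, h2⟩ | ⟨_, h2, _⟩ | ⟨h1, _, _⟩
      · linarith
      · exact h2
      · linarith
    have hrb : rb = true := by
      rcases Hbc with ⟨h1, h2⟩ | ⟨_, h2, _⟩ | ⟨h1, _, _⟩
      · linarith
      · exact h2
      · linarith
    have hla := pa hra
    have hlb := pb hrb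
    rw [hla, hra] at Hah
    refine Nbh ?_
    rw [hlb, hrb, show xb = xa by linarith]
    exact Hah
  · linarith
  · linarith
  · linarith
  · linarith
  · linarith
  · linarith
  · linarith
  · linarith
  · linarith
  · linarith
  · linarith
  · -- (A',B',D',E'): OO endgame
    have hrf : rf = true := by
      rcases Hcf with ⟨h1, h2⟩ | ⟨h1, _, _⟩ | ⟨_, h2, _⟩
      · linarith
      · linarith
      · exact h2
    have hla : la = false := by
      cases hl : la
      · rfl
      · exact absurd (Or.inr (Or.inr ⟨by linarith, hrf, hl⟩)) Naf
    have hlb : lb = false := by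
      cases hl : lb
      · rfl
      · exact absurd (Or.inr (Or.inr ⟨by linarith, hrf, hl⟩)) Nbf
    have hra : ra = false := by
      cases hr : ra
      · rfl
      · have := pa hr
        rw [hla] at this
        exact absurd this (by simp)
    have hrb : rb = false := by
      cases hr : rb
      · rfl
      · have := pb hr
        rw [hlb] at this
        exact absurd this (by simp)
    rw [hla, hra] at Hah
    refine Nbh ?_
    rw [hlb, hrb, show xb = xa by linarith]
    exact Hah

lemma key {xa xb xc xd xe xf xg xh : ℝ}
    {la ra lb rb lc rc ld rd le re lf rf lg rg lh rh : Bool}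
    (pa : ra = true → la = true) (pb : rb = true → lb = true)
    (pd : rd = true → ld = true) (pe : re = true → le = true)
    (Hab : Meets xa xb la ra lb rb)
    (Hac : Meets xa xc la ra lc rc)
    (Hbc : Meets xb xc lb rb lc rc)
    (Hcd : Meets xc xd lc rc ld rd)
    (Hce : Meets xc xe lc rc le re)
    (Hcf : Meets xc xf lc rc lf rf)
    (Hde : Meets xd xe ld rd le re)
    (Hah : Meets xa xh la ra lh rh)
    (Heg : Meets xe xg le re lg rg)
    (Nad : ¬ Meets xa xd la ra ld rd)
    (Nae : ¬ Meets xa xe la ra le re)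
    (Nbd : ¬ Meets xb xd lb rb ld rd)
    (Nbe : ¬ Meets xb xe lb rb le re)
    (Naf : ¬ Meets xa xf la ra lf rf)
    (Nbf : ¬ Meets xb xf lb rb lf rf)
    (Ndf : ¬ Meets xd xf ld rd lf rf)
    (Nef : ¬ Meets xe xf le re lf rf)
    (Nbh : ¬ Meets xb xh lb rb lh rh)
    (Ndg : ¬ Meets xd xg ld rd lg rg) : False := by
  obtain ⟨hde1, hde2⟩ := Meets_far Hde
  obtain ⟨hab1, hab2⟩ := Meets_far Hab
  rcases notMeets_far Nad with h | h
  · exact key' pa pb (by linarith) Hab Hac Hbc Hcd Hce Hcf Hde Hah Heg Nad Nae Nbd Nbe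
      Naf Nbf Ndf Nef Nbh Ndg
  · have heb : xe + 1 ≤ xb := by
      rcases notMeets_far Nbe with h2 | h2
      · rcases notMeets_far Nae with h3 | h3
        · linarith
        · linarith
      · exact h2
    exact key' pe pd (by linarith) (Meets_comm Hde) (Meets_comm Hce) (Meets_comm Hcd)
      (Meets_comm Hbc) (Meets_comm Hac) Hcf (Meets_comm Hab) Heg Hah
      (fun m => Nbe (Meets_comm m)) (fun m => Nae (Meets_comm m))
      (fun m => Nbd (Meets_comm m)) (fun m => Nad (Meets_comm m))
      Nef Ndf Nbf Naf Ndg Nbh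

lemma noCO : ¬ (∃ f : Fin 8 → Set ℝ, IsRep G9 f ∧
    ∀ v, IsUnitCC (f v) ∨ IsUnitOO (f v) ∨ IsUnitCO (f v)) := by
  rintro ⟨f, hrep, htypes⟩
  have hdata : ∀ v : Fin 8, ∃ x : ℝ, ∃ l r : Bool,
      f v = UI x l r ∧ (r = true → l = true) := by
    intro v
    rcases htypes v with ⟨x, hx⟩ | ⟨x, hx⟩ | ⟨x, hx⟩
    · exact ⟨x, true, true, by rw [hx, Icc_eq_UI], fun _ => rfl⟩
    · exact ⟨x, false, false, by rw [hx, Ioo_eq_UI], fun h => by simp at h⟩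
    · exact ⟨x, true, false, by rw [hx, Ico_eq_UI], fun _ => rfl⟩
  choose x l r hf hp using hdata
  have adj : ∀ u v : Fin 8, u ≠ v →
      (G9.Adj u v ↔ Meets (x u) (x v) (l u) (r u) (l v) (r v)) := by
    intro u v huv
    rw [hrep u v huv, hf u, hf v, UI_inter]
  exact key (hp 0) (hp 1) (hp 3) (hp 4)
    ((adj 0 1 (by decide)).mp (by simp [G9] <;> decide))
    ((adj 0 2 (by decide)).mp (by simp [G9] <;> decide))
    ((adj 1 2 (by decide)).mp (by simp [G9] <;> decide))
    ((adj 2 3 (by decide)).mp (by simp [G9] <;> decide))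
    ((adj 2 4 (by decide)).mp (by simp [G9] <;> decide))
    ((adj 2 5 (by decide)).mp (by simp [G9] <;> decide))
    ((adj 3 4 (by decide)).mp (by simp [G9] <;> decide))
    ((adj 0 7 (by decide)).mp (by simp [G9] <;> decide))
    ((adj 4 6 (by decide)).mp (by simp [G9] <;> decide))
    (fun m => (by simp [G9] <;> decide : ¬ G9.Adj 0 3) ((adj 0 3 (by decide)).mpr m))
    (fun m => (by simp [G9] <;> decide : ¬ G9.Adj 0 4) ((adj 0 4 (by decide)).mpr m))
    (fun m => (by simp [G9] <;> decide : ¬ G9.Adj 1 3) ((adj 1 3 (by decide)).mpr m))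
    (fun m => (by simp [G9] <;> decide : ¬ G9.Adj 1 4) ((adj 1 4 (by decide)).mpr m))
    (fun m => (by simp [G9] <;> decide : ¬ G9.Adj 0 5) ((adj 0 5 (by decide)).mpr m))
    (fun m => (by simp [G9] <;> decide : ¬ G9.Adj 1 5) ((adj 1 5 (by decide)).mpr m))
    (fun m => (by simp [G9] <;> decide : ¬ G9.Adj 3 5) ((adj 3 5 (by decide)).mpr m))
    (fun m => (by simp [G9] <;> decide : ¬ G9.Adj 4 5) ((adj 4 5 (by decide)).mpr m))
    (fun m => (by simp [G9] <;> decide : ¬ G9.Adj 1 7) ((adj 1 7 (by decide)).mpr m))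
    (fun m => (by simp [G9] <;> decide : ¬ G9.Adj 3 6) ((adj 3 6 (by decide)).mpr m))

lemma noOC : ¬ (∃ f : Fin 8 → Set ℝ, IsRep G9 f ∧
    ∀ v, IsUnitCC (f v) ∨ IsUnitOO (f v) ∨ IsUnitOC (f v)) := by
  rintro ⟨f, hrep, htypes⟩
  apply noCO
  refine ⟨fun v => Neg.neg ⁻¹' f v, ?_, ?_⟩
  · intro u v huv
    rw [hrep u v huv]
    constructor
    · rintro ⟨t, h1, h2⟩
      exact ⟨-t, by simpa using h1, by simpa using h2⟩
    · rintro ⟨t, h1, h2⟩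
      exact ⟨-t, h1, h2⟩
  · intro v
    rcases htypes v with ⟨y, hy⟩ | ⟨y, hy⟩ | ⟨y, hy⟩
    · left
      refine ⟨-y - 1, ?_⟩
      show Neg.neg ⁻¹' (f v) = _
      rw [hy]
      ext t
      simp only [Set.mem_preimage, Set.mem_Icc]
      constructor <;> rintro ⟨h1, h2⟩ <;> exact ⟨by linarith, by linarith⟩
    · right; left
      refine ⟨-y - 1, ?_⟩
      show Neg.neg ⁻¹' (f v) = _
      rw [hy]
      ext t
      simp only [Set.mem_preimage, Set.mem_Ioo]
      constructor <;> rintro ⟨h1, h2⟩ <;> exact ⟨by linarith, by linarith⟩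
    · right; right
      refine ⟨-y - 1, ?_⟩
      show Neg.neg ⁻¹' (f v) = _
      rw [hy]
      ext t
      simp only [Set.mem_preimage, Set.mem_Ioc, Set.mem_Ico]
      constructor <;> rintro ⟨h1, h2⟩ <;> exact ⟨by linarith, by linarith⟩

def px : Fin 8 → ℝ := fun v =>
  match v.val with
  | 0 => 0 | 1 => 0 | 2 => 1 | 3 => 2 | 4 => 2 | 5 => 1 | 6 => 3 | _ => -1
def pl : Fin 8 → Bool := fun v =>
  match v.val with
  | 1 => false | 5 => false | _ => true
def pr : Fin 8 → Bool := fun v =>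
  match v.val with
  | 3 => false | 5 => false | _ => true

set_option maxHeartbeats 1000000 in
lemma row0 (v : Fin 8) (huv : (0:Fin 8) ≠ v) :
    G9.Adj 0 v ↔ Meets (px 0) (px v) (pl 0) (pr 0) (pl v) (pr v) := by
  fin_cases v <;>
    first
      | exact absurd rfl huv
      | (norm_num [px, pl, pr, Meets, G9]; try decide)

set_option maxHeartbeats 1000000 in
lemma row1 (v : Fin 8) (huv : (1:Fin 8) ≠ v) :
    G9.Adj 1 v ↔ Meets (px 1) (px v) (pl 1) (pr 1) (pl v) (pr v) := by
  fin_cases v <;>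
    first
      | exact absurd rfl huv
      | (norm_num [px, pl, pr, Meets, G9]; try decide)

set_option maxHeartbeats 1000000 in
lemma row2 (v : Fin 8) (huv : (2:Fin 8) ≠ v) :
    G9.Adj 2 v ↔ Meets (px 2) (px v) (pl 2) (pr 2) (pl v) (pr v) := by
  fin_cases v <;>
    first
      | exact absurd rfl huv
      | (norm_num [px, pl, pr, Meets, G9]; try decide)

set_option maxHeartbeats 1000000 in
lemma row3 (v : Fin 8) (huv : (3:Fin 8) ≠ v) :
    G9.Adj 3 v ↔ Meets (px 3) (px v) (pl 3) (pr 3) (pl v) (pr v) := by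
  fin_cases v <;>
    first
      | exact absurd rfl huv
      | (norm_num [px, pl, pr, Meets, G9]; try decide)

set_option maxHeartbeats 1000000 in
lemma row4 (v : Fin 8) (huv : (4:Fin 8) ≠ v) :
    G9.Adj 4 v ↔ Meets (px 4) (px v) (pl 4) (pr 4) (pl v) (pr v) := by
  fin_cases v <;>
    first
      | exact absurd rfl huv
      | (norm_num [px, pl, pr, Meets, G9]; try decide)

set_option maxHeartbeats 1000000 in
lemma row5 (v : Fin 8) (huv : (5:Fin 8) ≠ v) :
    G9.Adj 5 v ↔ Meets (px 5) (px v) (pl 5) (pr 5) (pl v) (pr v) := by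
  fin_cases v <;>
    first
      | exact absurd rfl huv
      | (norm_num [px, pl, pr, Meets, G9]; try decide)

set_option maxHeartbeats 1000000 in
lemma row6 (v : Fin 8) (huv : (6:Fin 8) ≠ v) :
    G9.Adj 6 v ↔ Meets (px 6) (px v) (pl 6) (pr 6) (pl v) (pr v) := by
  fin_cases v <;>
    first
      | exact absurd rfl huv
      | (norm_num [px, pl, pr, Meets, G9]; try decide)

set_option maxHeartbeats 1000000 in
lemma row7 (v : Fin 8) (huv : (7:Fin 8) ≠ v) :
    G9.Adj 7 v ↔ Meets (px 7) (px v) (pl 7) (pr 7) (pl v) (pr v) := by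
  fin_cases v <;>
    first
      | exact absurd rfl huv
      | (norm_num [px, pl, pr, Meets, G9]; try decide)

lemma hasMixed : MixedUIG G9 := by
  refine ⟨fun v => UI (px v) (pl v) (pr v), ?_, ?_⟩
  · intro u v huv
    rw [UI_inter]
    fin_cases u
    · exact row0 v huv
    · exact row1 v huv
    · exact row2 v huv
    · exact row3 v huv
    · exact row4 v huv
    · exact row5 v huv
    · exact row6 v huv
    · exact row7 v huv
  · intro v
    fin_cases v
    · exact Or.inl ⟨0, (Icc_eq_UI 0).symm⟩
    · exact Or.inr (Or.inr (Or.inr ⟨0, (Ioc_eq_UI 0).symm⟩))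
    · exact Or.inl ⟨1, (Icc_eq_UI 1).symm⟩
    · exact Or.inr (Or.inr (Or.inl ⟨2, (Ico_eq_UI 2).symm⟩))
    · exact Or.inl ⟨2, (Icc_eq_UI 2).symm⟩
    · exact Or.inr (Or.inl ⟨1, (Ioo_eq_UI 1).symm⟩)
    · exact Or.inl ⟨3, (Icc_eq_UI 3).symm⟩
    · exact Or.inl ⟨-1, (Icc_eq_UI (-1)).symm⟩

theorem stmt9 :
    MixedUIG G9 ∧
    ¬ (∃ f : Fin 8 → Set ℝ, IsRep G9 f ∧
      ∀ v, IsUnitCC (f v) ∨ IsUnitOO (f v) ∨ IsUnitCO (f v)) ∧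
    ¬ (∃ f : Fin 8 → Set ℝ, IsRep G9 f ∧
      ∀ v, IsUnitCC (f v) ∨ IsUnitOO (f v) ∨ IsUnitOC (f v)) :=
  ⟨hasMixed, noCO, noOC⟩
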